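/- Let f(x) = Σ_{j=0}^∞ a_j x^j be an entire function with a_j > 0 for all j, and let S_n(x) = Σ_{j=0}^n a_j x^j be its sections. Suppose there exists an infinite increasing sequence of indices n_1 < n_2 < ... such that each S_{n_j} has all of its complex roots real, and suppose the limit δ_∞ = lim_{n→∞} a_n^2/(a_{n−1} a_{n+1}) exists. Then for every positive integer m the polynomial Σ_{j=0}^m x^j/(j!·(√δ_∞)^{j^2}) has all of its complex roots real. -/

import Mathlib

open Polynomial Filter

/-- A real polynomial is hyperbolic if all of its complex roots are real. -/
def Hyperbolic (P : Polynomial ℝ) : Prop :=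
  ∀ z : ℂ, Polynomial.aeval z P = 0 → z.im = 0

/-- The `i`-th section `a_0 + a_1 x + ... + a_i x^i` of the coefficient sequence `a`. -/
noncomputable def sect (a : ℕ → ℝ) (i : ℕ) : Polynomial ℝ :=
  ∑ j ∈ Finset.range (i + 1), Polynomial.C (a j) * Polynomial.X ^ j

namespace Stmt19Aux

lemma multiset_pow_le_prod (z : ℂ) :
    ∀ s : Multiset ℂ, (∀ r ∈ s, r.im = 0) →
      |z.im| ^ Multiset.card s ≤ (s.map fun r => ‖z - r‖).prod := by
  intro s
  induction s using Multiset.induction_on with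
  | empty => simp
  | cons r t ih =>
    intro h
    have hr : r.im = 0 := h r (Multiset.mem_cons_self r t)
    have ht := ih fun x hx => h x (Multiset.mem_cons_of_mem hx)
    simp only [Multiset.card_cons, Multiset.map_cons, Multiset.prod_cons, pow_succ']
    refine mul_le_mul ?_ ht (by positivity) (norm_nonneg _)
    calc |z.im| = |(z - r).im| := by rw [Complex.sub_im, hr, sub_zero]
    _ ≤ ‖z - r‖ := Complex.abs_im_le_norm _

lemma eval_derivative_multiset_prod (z : ℂ) :
    ∀ s : Multiset ℂ, (∀ r ∈ s, z - r ≠ 0) →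
      Polynomial.eval z (Polynomial.derivative (s.map fun r => X - C r).prod) =
        Polynomial.eval z ((s.map fun r => X - C r).prod) * (s.map fun r => (z - r)⁻¹).sum := by
  intro s
  induction s using Multiset.induction_on with
  | empty => simp
  | cons r t ih =>
    intro h
    have hr : z - r ≠ 0 := h r (Multiset.mem_cons_self r t)
    have ht := ih fun x hx => h x (Multiset.mem_cons_of_mem hx)
    simp only [Multiset.map_cons, Multiset.prod_cons, Multiset.sum_cons, derivative_mul,
      derivative_sub, derivative_X, derivative_C, sub_zero, eval_add, eval_mul, eval_sub,
      eval_X, eval_C, eval_one, one_mul] at *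
    rw [ht]
    field_simp

lemma im_sum_inv (z : ℂ) :
    ∀ s : Multiset ℂ, (∀ r ∈ s, r.im = 0) →
      ((s.map fun r => (z - r)⁻¹).sum).im
        = -z.im * (s.map fun r => (Complex.normSq (z - r))⁻¹).sum := by
  intro s
  induction s using Multiset.induction_on with
  | empty => simp
  | cons r t ih =>
    intro h
    have hr : r.im = 0 := h r (Multiset.mem_cons_self r t)
    have ht := ih fun x hx => h x (Multiset.mem_cons_of_mem hx)
    simp only [Multiset.map_cons, Multiset.sum_cons, Complex.add_im, Complex.inv_im,
      Complex.sub_im, hr, sub_zero, ht]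
    ring

lemma multiset_sum_pos :
    ∀ s : Multiset ℝ, (∀ x ∈ s, 0 < x) → s ≠ 0 → 0 < s.sum := by
  intro s
  induction s using Multiset.induction_on with
  | empty => intro _ h; exact absurd rfl h
  | cons r t _ =>
    intro h _
    have h1 : 0 ≤ t.sum := Multiset.sum_nonneg fun x hx => (h x (Multiset.mem_cons_of_mem hx)).le
    have h2 := h r (Multiset.mem_cons_self r t)
    rw [Multiset.sum_cons]
    linarith

lemma hyperbolic_derivative {P : Polynomial ℝ} (hd : 1 ≤ P.natDegree) (h : Hyperbolic P) :
    Hyperbolic (Polynomial.derivative P) := by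
  intro z hz
  by_contra him
  have hP0 : P ≠ 0 := fun h0 => by simp [h0] at hd
  set Q : Polynomial ℂ := P.map (algebraMap ℝ ℂ) with hQdef
  have hQ0 : Q ≠ 0 := Polynomial.map_ne_zero hP0
  have hsp : Q.Splits := IsAlgClosed.splits Q
  have hroots : ∀ r ∈ Q.roots, r.im = 0 := by
    intro r hr
    apply h
    have := Polynomial.isRoot_of_mem_roots hr
    rwa [Polynomial.IsRoot, hQdef, Polynomial.eval_map, ← Polynomial.aeval_def] at this
  have hzr : ∀ r ∈ Q.roots, z - r ≠ 0 := by
    intro r hr h0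
    rw [sub_eq_zero] at h0
    exact him (h0 ▸ hroots r hr)
  have hfac : Q = C Q.leadingCoeff * (Q.roots.map fun a => X - C a).prod :=
    hsp.eq_prod_roots
  have hD0 : Polynomial.eval z (Polynomial.derivative Q) = 0 := by
    rw [hQdef, derivative_map, Polynomial.eval_map, ← Polynomial.aeval_def, hz]
  have hprodne : Polynomial.eval z ((Q.roots.map fun a => X - C a).prod) ≠ 0 := by
    rw [Polynomial.eval_multiset_prod]
    apply Multiset.prod_ne_zero
    intro h0
    rw [Multiset.map_map, Multiset.mem_map] at h0
    obtain ⟨r, hr, hre⟩ := h0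
    simp only [Function.comp_apply, eval_sub, eval_X, eval_C] at hre
    exact hzr r hr hre
  have hsum := eval_derivative_multiset_prod z Q.roots hzr
  rw [hfac, derivative_C_mul, Polynomial.eval_mul, hsum, Polynomial.eval_C] at hD0
  have hlc : Q.leadingCoeff ≠ 0 := Polynomial.leadingCoeff_ne_zero.2 hQ0
  have hS : (Q.roots.map fun r => (z - r)⁻¹).sum = 0 := by
    rcases mul_eq_zero.1 hD0 with h0 | h0
    · exact absurd h0 hlc
    · rcases mul_eq_zero.1 h0 with h1 | h1
      · exact absurd h1 hprodne
      · exact h1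
  have hcard : Q.roots ≠ 0 := by
    have hc : Q.roots.card = Q.natDegree := (Polynomial.splits_iff_card_roots).1 hsp
    have hQd : 1 ≤ Q.natDegree := by rwa [hQdef, Polynomial.natDegree_map]
    intro h0
    rw [h0] at hc
    simp only [Multiset.card_zero] at hc
    omega
  have him2 := im_sum_inv z Q.roots hroots
  rw [hS] at him2
  have hpos : 0 < (Q.roots.map fun r => (Complex.normSq (z - r))⁻¹).sum := by
    apply multiset_sum_pos
    · intro x hx
      rw [Multiset.mem_map] at hx
      obtain ⟨r, hr, rfl⟩ := hx
      have h1 : Complex.normSq (z - r) ≠ 0 := fun h2 => hzr r hr (Complex.normSq_eq_zero.1 h2)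
      have h2 : 0 ≤ Complex.normSq (z - r) := Complex.normSq_nonneg _
      exact inv_pos.2 (lt_of_le_of_ne h2 (Ne.symm h1))
    · simpa using hcard
  simp only [Complex.zero_im] at him2
  have : z.im = 0 := by
    rcases mul_eq_zero.1 him2.symm with h0 | h0
    · linarith [neg_eq_zero.1 h0]
    · exact absurd h0 hpos.ne'
  exact him this

lemma sect_coeff (a : ℕ → ℝ) (n k : ℕ) :
    (sect a n).coeff k = if k ≤ n then a k else 0 := by
  unfold sect
  rw [Polynomial.finset_sum_coeff]
  simp only [Polynomial.coeff_C_mul, Polynomial.coeff_X_pow, mul_ite, mul_one, mul_zero]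
  rw [Finset.sum_ite_eq (Finset.range (n + 1)) k fun j => a j]
  simp [Nat.lt_succ_iff]

lemma natDegree_sect_le (a : ℕ → ℝ) (n : ℕ) : (sect a n).natDegree ≤ n := by
  apply Polynomial.natDegree_le_iff_coeff_eq_zero.2
  intro k hk
  rw [sect_coeff, if_neg (by omega)]

lemma natDegree_sect (a : ℕ → ℝ) (n : ℕ) (ha : a n ≠ 0) : (sect a n).natDegree = n := by
  refine le_antisymm (natDegree_sect_le a n) (Polynomial.le_natDegree_of_ne_zero ?_)
  rw [sect_coeff, if_pos le_rfl]
  exact ha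

lemma aeval_sect (b : ℕ → ℝ) (M : ℕ) (z : ℂ) :
    Polynomial.aeval z (sect b M) = ∑ k ∈ Finset.range (M + 1), (b k : ℂ) * z ^ k := by
  unfold sect
  rw [map_sum]
  refine Finset.sum_congr rfl fun k _ => ?_
  rw [map_mul, map_pow, Polynomial.aeval_C, Polynomial.aeval_X]
  norm_num

lemma sect_iter (a : ℕ → ℝ) (hpos : ∀ j, 0 < a j) (n : ℕ) (h : Hyperbolic (sect a n)) :
    ∀ i, i + 1 ≤ n →
      Hyperbolic (Polynomial.derivative^[i] (sect a n)) ∧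
        (Polynomial.derivative^[i] (sect a n)).natDegree = n - i := by
  intro i
  induction i with
  | zero =>
    intro _
    exact ⟨h, by simpa using natDegree_sect a n (hpos n).ne'⟩
  | succ i ih =>
    intro hi
    obtain ⟨h1, h2⟩ := ih (by omega)
    have hdeg : 1 ≤ (Polynomial.derivative^[i] (sect a n)).natDegree := by omega
    constructor
    · rw [Function.iterate_succ_apply']
      exact hyperbolic_derivative hdeg h1
    · have hub : (Polynomial.derivative^[i + 1] (sect a n)).natDegree ≤ n - (i + 1) := by
        refine le_trans (Polynomial.natDegree_iterate_derivative _ _) ?_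
        have := natDegree_sect a n (hpos n).ne'
        omega
      have hlb : n - (i + 1) ≤ (Polynomial.derivative^[i + 1] (sect a n)).natDegree := by
        apply Polynomial.le_natDegree_of_ne_zero
        rw [Polynomial.coeff_iterate_derivative, sect_coeff, if_pos (by omega)]
        have hpos1 : 0 < (n - (i + 1) + (i + 1)).descFactorial (i + 1) :=
          Nat.pos_of_ne_zero fun h0 => by
            have := Nat.descFactorial_eq_zero_iff_lt.1 h0
            omega
        have h3 := hpos (n - (i + 1) + (i + 1))
        simp only [nsmul_eq_mul]
        have h4 : (0:ℝ) < ((n - (i + 1) + (i + 1)).descFactorial (i + 1) : ℝ) := by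
          exact_mod_cast hpos1
        exact (mul_pos h4 h3).ne'
      omega

lemma hyperbolic_lowerBound {Q : Polynomial ℝ} (h : Hyperbolic Q) (hQ0 : Q ≠ 0) (z : ℂ) :
    |Q.leadingCoeff| * |z.im| ^ Q.natDegree ≤ ‖Polynomial.aeval z Q‖ := by
  set Qc : Polynomial ℂ := Q.map (algebraMap ℝ ℂ) with hQc
  have hQc0 : Qc ≠ 0 := Polynomial.map_ne_zero hQ0
  have hsp : Qc.Splits := IsAlgClosed.splits Qc
  have hroots : ∀ r ∈ Qc.roots, r.im = 0 := by
    intro r hr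
    apply h
    have := Polynomial.isRoot_of_mem_roots hr
    rwa [Polynomial.IsRoot, hQc, Polynomial.eval_map, ← Polynomial.aeval_def] at this
  have hfac : Qc = C Qc.leadingCoeff * (Qc.roots.map fun a => X - C a).prod :=
    hsp.eq_prod_roots
  have hev : Polynomial.aeval z Q = Polynomial.eval z Qc := by
    rw [hQc, Polynomial.eval_map, Polynomial.aeval_def]
  have hnp : ∀ t : Multiset ℂ, ‖t.prod‖ = (t.map fun x => ‖x‖).prod := fun t =>
    map_multiset_prod (normHom : ℂ →*₀ ℝ) t
  rw [hev, hfac, Polynomial.eval_mul, Polynomial.eval_C, norm_mul,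
    Polynomial.eval_multiset_prod, Multiset.map_map, hnp, Multiset.map_map]
  have h1 : ‖Qc.leadingCoeff‖ = |Q.leadingCoeff| := by
    rw [hQc, Polynomial.leadingCoeff_map]
    simp
  have h2 : Multiset.card Qc.roots = Q.natDegree := by
    rw [(Polynomial.splits_iff_card_roots).1 hsp, hQc, Polynomial.natDegree_map]
  rw [h1]
  refine mul_le_mul_of_nonneg_left ?_ (abs_nonneg _)
  have := multiset_pow_le_prod z Qc.roots hroots
  rw [h2] at this
  refine le_trans this (le_of_eq ?_)
  congr 1
  ext r
  simp

lemma descF_real (d k : ℕ) :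
    (((d + k).descFactorial d : ℕ) : ℝ) = ((d + k).factorial : ℝ) / (k.factorial : ℝ) := by
  have h := Nat.factorial_mul_descFactorial (Nat.le_add_right d k)
  have h2 : d + k - d = k := by omega
  rw [h2] at h
  have h3 : ((k.factorial : ℕ) : ℝ) * ((d + k).descFactorial d : ℝ) = ((d + k).factorial : ℝ) := by
    exact_mod_cast congrArg (fun x : ℕ => (x : ℝ)) h
  have hk : (k.factorial : ℝ) ≠ 0 := by exact_mod_cast k.factorial_ne_zero
  field_simp
  linarith [h3]

lemma main_pos (a : ℕ → ℝ) (hpos : ∀ j, 0 < a j)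
    (nseq : ℕ → ℕ) (hmono : StrictMono nseq)
    (hhyp : ∀ j : ℕ, Hyperbolic (sect a (nseq j)))
    (δ : ℝ) (hδpos : 0 < δ)
    (hδ : Tendsto (fun n : ℕ => a n ^ 2 / (a (n - 1) * a (n + 1))) atTop (nhds δ))
    (m : ℕ) (hm : 1 ≤ m) :
    Hyperbolic (∑ j ∈ Finset.range (m + 1),
      Polynomial.C (1 / ((j.factorial : ℝ) * Real.sqrt δ ^ (j ^ 2))) * Polynomial.X ^ j) := by
  set s := Real.sqrt δ with hs
  have hs0 : 0 < s := Real.sqrt_pos.2 hδpos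
  have hs2 : s ^ 2 = δ := Real.sq_sqrt hδpos.le
  set tgt : ℕ → ℝ := fun k => 1 / ((k.factorial : ℝ) * s ^ (k ^ 2)) with htgt
  show Hyperbolic (sect tgt m)
  intro z hz
  by_contra him
  -- index bookkeeping
  set n : ℕ → ℕ := fun j => nseq (j + m + 1) with hndef
  have hnge : ∀ j, j + m + 1 ≤ n j := fun j => hmono.le_apply
  set d : ℕ → ℕ := fun j => n j - m with hddef
  have hdm : ∀ j, d j + m = n j := fun j => by
    have := hnge j; simp only [hddef]; omega
  have hd1 : ∀ j, j + 1 ≤ d j := fun j => by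
    have := hnge j; simp only [hddef]; omega
  have hdtop : Tendsto d atTop atTop :=
    tendsto_atTop_mono (fun j => by simp only [id_eq]; have := hd1 j; omega) tendsto_id
  have hntop : Tendsto n atTop atTop :=
    tendsto_atTop_mono (fun j => by simp only [id_eq]; have := hnge j; omega) tendsto_id
  have hntopR : Tendsto (fun j => (n j : ℝ)) atTop atTop :=
    tendsto_natCast_atTop_atTop.comp hntop
  have hnR : ∀ j, (0 : ℝ) < (n j : ℝ) := fun j => by
    have := hnge j
    have : 0 < n j := by omega
    exact_mod_cast this
  -- iterated derivatives of the sections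
  set P : ℕ → Polynomial ℝ := fun j => Polynomial.derivative^[d j] (sect a (n j)) with hPdef
  have hPfull : ∀ j, Hyperbolic (P j) ∧ (P j).natDegree = n j - d j := fun j =>
    sect_iter a hpos (n j) (hhyp (j + m + 1)) (d j)
      (by have := hdm j; have := hd1 j; omega)
  have hPdeg : ∀ j, (P j).natDegree = m := fun j => by
    have := (hPfull j).2
    have h2 := hdm j
    omega
  have hPcoeff : ∀ j k, k ≤ m →
      (P j).coeff k = ((d j + k).descFactorial (d j) : ℝ) * a (d j + k) := by
    intro j k hk
    have hswap : k + d j = d j + k := by omega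
    simp only [hPdef]
    rw [Polynomial.coeff_iterate_derivative, hswap, sect_coeff,
      if_pos (by have := hdm j; omega : d j + k ≤ n j), nsmul_eq_mul]
  -- the rescaled polynomials
  set lam : ℕ → ℝ := fun j => a (d j) / (a (d j + 1) * (s * (n j : ℝ))) with hlam
  have hlam0 : ∀ j, 0 < lam j := fun j =>
    div_pos (hpos _) (mul_pos (hpos _) (mul_pos hs0 (hnR j)))
  set c : ℕ → ℕ → ℝ := fun j k =>
    a (d j + k) * ((d j + k).factorial : ℝ) * lam j ^ k /
      ((k.factorial : ℝ) * a (d j) * ((d j).factorial : ℝ)) with hc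
  have hcpos : ∀ j k, 0 < c j k := by
    intro j k
    have h1 := hpos (d j + k)
    have h2 := hpos (d j)
    have h3 := hlam0 j
    have f1 : (0:ℝ) < ((d j + k).factorial : ℝ) := by exact_mod_cast (d j + k).factorial_pos
    have f2 : (0:ℝ) < (k.factorial : ℝ) := by exact_mod_cast k.factorial_pos
    have f3 : (0:ℝ) < ((d j).factorial : ℝ) := by exact_mod_cast (d j).factorial_pos
    simp only [hc]
    positivity
  have hccoeff : ∀ j k, k ≤ m →
      c j k = (P j).coeff k * lam j ^ k / (a (d j) * ((d j).factorial : ℝ)) := by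
    intro j k hk
    rw [hPcoeff j k hk, descF_real]
    have hk0 : (k.factorial : ℝ) ≠ 0 := by exact_mod_cast k.factorial_ne_zero
    have hd0 : ((d j).factorial : ℝ) ≠ 0 := by exact_mod_cast (d j).factorial_ne_zero
    have ha0 : a (d j) ≠ 0 := (hpos _).ne'
    simp only [hc]
    field_simp
  set Qp : ℕ → Polynomial ℝ := fun j => sect (c j) m with hQp
  -- hyperbolicity of the rescaled polynomials
  have hQhyp : ∀ j, Hyperbolic (Qp j) := by
    intro j w hw
    have hAd : ((a (d j) : ℝ) : ℂ) ≠ 0 := by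
      exact_mod_cast Complex.ofReal_ne_zero.2 (hpos (d j)).ne'
    have hDf : (((d j).factorial : ℝ) : ℂ) ≠ 0 := by
      have : ((d j).factorial : ℝ) ≠ 0 := by exact_mod_cast (d j).factorial_ne_zero
      exact_mod_cast Complex.ofReal_ne_zero.2 this
    have hkey : Polynomial.aeval w (Qp j) =
        (1 / (((a (d j) : ℝ) : ℂ) * (((d j).factorial : ℝ) : ℂ))) *
          Polynomial.aeval (((lam j : ℝ) : ℂ) * w) (P j) := by
      rw [hQp]
      rw [aeval_sect]
      rw [Polynomial.aeval_eq_sum_range' (n := m + 1) (by rw [hPdeg j]; omega)]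
      rw [Finset.mul_sum]
      refine Finset.sum_congr rfl fun k hk => ?_
      rw [Finset.mem_range, Nat.lt_succ_iff] at hk
      have hck := hccoeff j k hk
      rw [hck]
      have hk0 : (((k.factorial : ℝ)) : ℂ) ≠ 0 := by
        have : (k.factorial : ℝ) ≠ 0 := by exact_mod_cast k.factorial_ne_zero
        exact_mod_cast Complex.ofReal_ne_zero.2 this
      rw [mul_pow, Complex.real_smul]
      push_cast
      field_simp
    rw [hkey] at hw
    have h2 : Polynomial.aeval (((lam j : ℝ) : ℂ) * w) (P j) = 0 := by
      rcases mul_eq_zero.1 hw with h0 | h0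
      · exfalso
        rw [_root_.div_eq_zero_iff] at h0
        rcases h0 with h0 | h0
        · exact one_ne_zero h0
        · exact (mul_ne_zero hAd hDf) h0
      · exact h0
    have h3 := (hPfull j).1 _ h2
    rw [Complex.im_ofReal_mul] at h3
    rcases mul_eq_zero.1 h3 with h4 | h4
    · exact absurd h4 (hlam0 j).ne'
    · exact h4
  -- lower bound for each j
  have hQcoeffm : ∀ j, (Qp j).coeff m = c j m := by
    intro j
    simp only [hQp]
    rw [sect_coeff, if_pos le_rfl]
  have hQne : ∀ j, Qp j ≠ 0 := by
    intro j h0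
    have h1 := hQcoeffm j
    rw [h0, Polynomial.coeff_zero] at h1
    exact (hcpos j m).ne' h1.symm
  have hQdeg : ∀ j, (Qp j).natDegree = m := fun j => natDegree_sect (c j) m (hcpos j m).ne'
  have hQlead : ∀ j, (Qp j).leadingCoeff = c j m := by
    intro j
    rw [Polynomial.leadingCoeff, hQdeg j]
    exact hQcoeffm j
  have hlb : ∀ j, c j m * |z.im| ^ m ≤ ‖Polynomial.aeval z (Qp j)‖ := by
    intro j
    have := hyperbolic_lowerBound (hQhyp j) (hQne j) z
    rwa [hQlead j, hQdeg j, abs_of_pos (hcpos j m)] at this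
  -- limit of the Newton quotients along shifted indices
  have hq : ∀ i : ℕ, Tendsto (fun j => a (d j + i + 1) ^ 2 / (a (d j + i) * a (d j + i + 2)))
      atTop (nhds δ) := by
    intro i
    have h1 : Tendsto (fun j => d j + i + 1) atTop atTop :=
      tendsto_atTop_mono (fun j => by simp only [id_eq]; have := hd1 j; omega) tendsto_id
    have h2 := hδ.comp h1
    refine h2.congr fun j => ?_
    simp only [Function.comp_apply, Nat.add_sub_cancel]
  -- ratio limit
  have hrr : ∀ i : ℕ, Tendsto
      (fun j => (a (d j) / a (d j + 1)) / (a (d j + i) / a (d j + i + 1)))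
      atTop (nhds (δ⁻¹ ^ i)) := by
    intro i
    induction i with
    | zero =>
      have he : ∀ j, (a (d j) / a (d j + 1)) / (a (d j + 0) / a (d j + 0 + 1)) = 1 := by
        intro j
        have hx : a (d j) / a (d j + 1) ≠ 0 := div_ne_zero (hpos _).ne' (hpos _).ne'
        simp only [Nat.add_zero]
        exact div_self hx
      rw [pow_zero]
      exact tendsto_const_nhds.congr fun j => (he j).symm
    | succ i ih =>
      have hqi := (hq i).inv₀ hδpos.ne'
      have hmul := ih.mul hqi
      rw [← pow_succ] at hmul
      refine hmul.congr fun j => ?_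
      have n1 := (hpos (d j)).ne'
      have n2 := (hpos (d j + 1)).ne'
      have n3 := (hpos (d j + i)).ne'
      have n4 := (hpos (d j + i + 1)).ne'
      have n5 := (hpos (d j + i + 2)).ne'
      have e1 : d j + (i + 1) = d j + i + 1 := by omega
      have e2 : d j + i + 1 + 1 = d j + i + 2 := by omega
      rw [e1, e2]
      field_simp
  -- fraction limit
  have hfrac : ∀ k : ℕ, Tendsto (fun j => ((d j + k + 1 : ℕ) : ℝ) / ((n j : ℕ) : ℝ))
      atTop (nhds 1) := by
    intro k
    have h0 : Tendsto (fun j => ((k : ℝ) + 1 - m) / (n j : ℝ)) atTop (nhds 0) :=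
      tendsto_const_nhds.div_atTop hntopR
    have h1 : Tendsto (fun j => 1 + ((k : ℝ) + 1 - m) / (n j : ℝ)) atTop (nhds 1) := by
      simpa using tendsto_const_nhds.add h0
    refine h1.congr fun j => ?_
    have hcast : ((d j + k + 1 : ℕ) : ℝ) = (n j : ℝ) - m + k + 1 := by
      have h2 : ((d j : ℕ) : ℝ) + (m : ℝ) = ((n j : ℕ) : ℝ) := by exact_mod_cast congrArg (fun t : ℕ => (t : ℝ)) (hdm j)
      push_cast
      linarith
    rw [hcast]
    have hn0 : ((n j : ℕ) : ℝ) ≠ 0 := (hnR j).ne'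
    field_simp
    ring
  -- coefficient limits
  have hctend : ∀ k : ℕ, Tendsto (fun j => c j k) atTop (nhds (tgt k)) := by
    intro k
    induction k with
    | zero =>
      have he : ∀ j, c j 0 = 1 := by
        intro j
        have n1 := (hpos (d j)).ne'
        have n2 : ((d j).factorial : ℝ) ≠ 0 := by exact_mod_cast (d j).factorial_ne_zero
        simp only [hc, Nat.add_zero, pow_zero, Nat.factorial_zero, Nat.cast_one]
        field_simp
      have ht0 : tgt 0 = 1 := by simp [htgt]
      rw [ht0]
      exact tendsto_const_nhds.congr fun j => (he j).symm
    | succ k ih =>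
      have hrec : ∀ j, c j (k + 1) = c j k *
          (((a (d j) / a (d j + 1)) / (a (d j + k) / a (d j + k + 1))) *
            (((d j + k + 1 : ℕ) : ℝ) / ((n j : ℕ) : ℝ)) / (s * ((k : ℝ) + 1))) := by
        intro j
        have n1 := (hpos (d j)).ne'
        have n2 := (hpos (d j + 1)).ne'
        have n3 := (hpos (d j + k)).ne'
        have n4 := (hpos (d j + k + 1)).ne'
        have n5 : ((d j).factorial : ℝ) ≠ 0 := by exact_mod_cast (d j).factorial_ne_zero
        have n6 : (k.factorial : ℝ) ≠ 0 := by exact_mod_cast k.factorial_ne_zero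
        have n7 : ((n j : ℕ) : ℝ) ≠ 0 := (hnR j).ne'
        have n8 : s ≠ 0 := hs0.ne'
        have n9 : ((d j + k).factorial : ℝ) ≠ 0 := by exact_mod_cast (d j + k).factorial_ne_zero
        have e1 : d j + (k + 1) = d j + k + 1 := by omega
        simp only [hc, hlam, e1, Nat.factorial_succ, Nat.cast_mul, Nat.cast_add, Nat.cast_one]
        field_simp
        ring_nf
        field_simp
        rw [add_comm 1 (d j), mul_div_cancel_left₀ _ n2]
      have hmul : Tendsto (fun j =>
          ((a (d j) / a (d j + 1)) / (a (d j + k) / a (d j + k + 1))) *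
            (((d j + k + 1 : ℕ) : ℝ) / ((n j : ℕ) : ℝ)) / (s * ((k : ℝ) + 1))) atTop
          (nhds (δ⁻¹ ^ k * 1 / (s * ((k : ℝ) + 1)))) :=
        ((hrr k).mul (hfrac k)).div_const _
      have hval : tgt k * (δ⁻¹ ^ k * 1 / (s * ((k : ℝ) + 1))) = tgt (k + 1) := by
        simp only [htgt]
        rw [← hs2, mul_one]
        have he : s ^ ((k + 1) ^ 2) = s ^ (k ^ 2) * (s ^ 2) ^ k * s := by
          rw [← pow_mul, ← pow_add, ← pow_succ]
          congr 1
          ring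
        rw [he]
        have hf1 : (((k + 1).factorial : ℕ) : ℝ) = ((k : ℝ) + 1) * (k.factorial : ℝ) := by
          rw [Nat.factorial_succ]; push_cast; ring
        rw [hf1]
        have hk0 : (k.factorial : ℝ) ≠ 0 := by exact_mod_cast k.factorial_ne_zero
        have n8 : s ≠ 0 := hs0.ne'
        have hk1 : ((k : ℝ) + 1) ≠ 0 := by positivity
        field_simp
        ring_nf
        rw [← mul_pow, mul_inv_cancel₀ n8, one_pow]
      have hfin := ih.mul hmul
      rw [hval] at hfin
      exact hfin.congr fun j => (hrec j).symm
  -- evaluation limit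
  have hevQ : Tendsto (fun j => Polynomial.aeval z (Qp j)) atTop (nhds 0) := by
    have h2 : Polynomial.aeval z (sect tgt m) =
        ∑ k ∈ Finset.range (m + 1), ((tgt k : ℝ) : ℂ) * z ^ k := aeval_sect tgt m z
    have h3 : Tendsto (fun j => ∑ k ∈ Finset.range (m + 1), ((c j k : ℝ) : ℂ) * z ^ k) atTop
        (nhds (∑ k ∈ Finset.range (m + 1), ((tgt k : ℝ) : ℂ) * z ^ k)) := by
      apply tendsto_finset_sum
      intro k _
      exact ((Complex.continuous_ofReal.tendsto _).comp (hctend k)).mul_const _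
    rw [← h2, hz] at h3
    exact h3.congr fun j => (aeval_sect (c j) m z).symm
  have habs : Tendsto (fun j => ‖Polynomial.aeval z (Qp j)‖) atTop (nhds 0) := by
    have := hevQ.norm
    simpa using this
  have hfin2 : Tendsto (fun j => c j m * |z.im| ^ m) atTop (nhds (tgt m * |z.im| ^ m)) :=
    (hctend m).mul_const _
  have hle : tgt m * |z.im| ^ m ≤ 0 := le_of_tendsto_of_tendsto' hfin2 habs hlb
  have h2 : 0 < tgt m := by
    simp only [htgt]
    have : (0 : ℝ) < (m.factorial : ℝ) := by exact_mod_cast m.factorial_pos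
    exact div_pos one_pos (mul_pos this (pow_pos hs0 _))
  have h3 : 0 < |z.im| ^ m := pow_pos (abs_pos.2 him) m
  nlinarith

end Stmt19Aux

theorem stmt19 (a : ℕ → ℝ) (hpos : ∀ j, 0 < a j)
    (hent : ∀ x : ℝ, Summable fun j : ℕ => a j * x ^ j)
    (nseq : ℕ → ℕ) (hmono : StrictMono nseq)
    (hhyp : ∀ j : ℕ, Hyperbolic (sect a (nseq j)))
    (δ : ℝ)
    (hδ : Tendsto (fun n : ℕ => a n ^ 2 / (a (n - 1) * a (n + 1))) atTop (nhds δ)) :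
    ∀ m : ℕ, 1 ≤ m →
      Hyperbolic (∑ j ∈ Finset.range (m + 1),
        Polynomial.C (1 / ((j.factorial : ℝ) * Real.sqrt δ ^ (j ^ 2))) * Polynomial.X ^ j) := by
  intro m hm
  have hδ0 : 0 ≤ δ :=
    ge_of_tendsto' hδ fun k =>
      (div_pos (pow_pos (hpos k) 2) (mul_pos (hpos _) (hpos _))).le
  rcases eq_or_lt_of_le hδ0 with h0 | hδpos
  · -- degenerate case δ = 0 : the polynomial is the constant 1
    subst h0
    intro z hz
    exfalso
    have hone : Polynomial.aeval z (∑ j ∈ Finset.range (m + 1),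
        Polynomial.C (1 / ((j.factorial : ℝ) * Real.sqrt 0 ^ (j ^ 2))) * Polynomial.X ^ j)
        = 1 := by
      rw [map_sum]
      rw [Finset.sum_eq_single 0]
      · simp
      · intro b _ hb0
        have hb2 : b ^ 2 ≠ 0 := pow_ne_zero 2 hb0
        rw [Real.sqrt_zero, zero_pow hb2, mul_zero, div_zero]
        simp
      · intro h
        exact absurd (Finset.mem_range.2 (by omega)) h
    rw [hz] at hone
    exact zero_ne_one hone
  · exact Stmt19Aux.main_pos a hpos nseq hmono hhyp δ hδpos hδ m hm
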